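/- Curry's n-ary multiple fixed-point combinators are multiple fixed-point combinators: for every n ≥ 1, every 1 ≤ k ≤ n, and all λ-terms F_1,…,F_n, (Φ_k^n F_1 ⋯ F_n) =βη (F_k (Φ_1^n F_1 ⋯ F_n) ⋯ (Φ_n^n F_1 ⋯ F_n)). -/

import Mathlib

namespace LC

/-- Untyped λ-terms, de Bruijn indices. -/
inductive Tm : Type
  | var : ℕ → Tm
  | app : Tm → Tm → Tm
  | lam : Tm → Tm
  deriving DecidableEq

namespace Tm

/-- Shift the free variables ≥ c up by one. -/
def lift (c : ℕ) : Tm → Tm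
  | var n => if n < c then var n else var (n + 1)
  | app a b => app (lift c a) (lift c b)
  | lam a => lam (lift (c + 1) a)

/-- Substitute `s` for the free variable `k`. -/
def subst (k : ℕ) (s : Tm) : Tm → Tm
  | var n => if n = k then s else if k < n then var (n - 1) else var n
  | app a b => app (subst k s a) (subst k s b)
  | lam a => lam (subst (k + 1) (lift 0 s) a)

/-- One-step βη-reduction (with congruence closure). -/
inductive Step : Tm → Tm → Prop
  | beta (a b : Tm) : Step (app (lam a) b) (subst 0 b a)
  | eta (a : Tm) : Step (lam (app (lift 0 a) (var 0))) a
  | appL {a a' : Tm} (b : Tm) : Step a a' → Step (app a b) (app a' b)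
  | appR (a : Tm) {b b' : Tm} : Step b b' → Step (app a b) (app a b')
  | lamCongr {a a' : Tm} : Step a a' → Step (lam a) (lam a')

/-- βη-equivalence: the equivalence relation generated by βη-reduction. -/
def BetaEta : Tm → Tm → Prop := Relation.EqvGen Step

/-- Multi-step βη-reduction: reflexive-transitive closure of βη-reduction. -/
def Reduces : Tm → Tm → Prop := Relation.ReflTransGen Step

/-- I = λx.x -/
def I : Tm := lam (var 0)
/-- K = λxy.x -/
def K : Tm := lam (lam (var 1))
/-- B = λxyz.(x (y z)) -/
def B : Tm := lam (lam (lam (app (var 2) (app (var 1) (var 0)))))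
/-- C = λxyz.(x z y) -/
def C : Tm := lam (lam (lam (app (app (var 2) (var 0)) (var 1))))
/-- S = λxyz.(x z (y z)) -/
def S : Tm := lam (lam (lam (app (app (var 2) (var 0)) (app (var 1) (var 0)))))

/-- body of the n-th Church numeral: s (s ⋯ (s z)⋯), n times. -/
def churchBody : ℕ → Tm
  | 0 => var 0
  | n + 1 => app (var 1) (churchBody n)

/-- The n-th Church numeral c_n = λsz.(s (s ⋯ (s z)⋯)). -/
def church (n : ℕ) : Tm := lam (lam (churchBody n))

/-- n nested λ-abstractions. -/
def lamN : ℕ → Tm → Tm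
  | 0, t => t
  | n + 1, t => lam (lamN n t)

/-- Shift all free variables up by n. -/
def liftN (n : ℕ) (t : Tm) : Tm := (lift 0)^[n] t

/-- t (var (a+k-1)) ⋯ (var (a+1)) (var a) : left-associated application of t
to k variables with descending indices. -/
def appVars (t : Tm) (a k : ℕ) : Tm :=
  ((List.range k).reverse).foldl (fun s i => app s (var (a + i))) t

/-- t (var a) (var (a+1)) ⋯ (var (a+k-1)) : left-associated application of t
to k variables with ascending indices. -/
def appVarsAsc (t : Tm) (a k : ℕ) : Tm :=
  (List.range k).foldl (fun s i => app s (var (a + i))) t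

/-- Left-associated application of t to a list of terms. -/
def appList (t : Tm) (l : List Tm) : Tm := l.foldl app t

/-- K_n = λp x_1…x_n. p -/
def Kn (n : ℕ) : Tm := lamN (n + 1) (var n)
/-- S_n = λpq x_1…x_n.(p x_1⋯x_n (q x_1⋯x_n)) -/
def Sn (n : ℕ) : Tm :=
  lamN (n + 2) (app (appVars (var (n + 1)) 0 n) (appVars (var n) 0 n))
/-- B_n = λpq x_1…x_n.(p (q x_1⋯x_n)) -/
def Bn (n : ℕ) : Tm := lamN (n + 2) (app (var (n + 1)) (appVars (var n) 0 n))
/-- C_n = λpq x_1…x_n.(p x_1⋯x_n q) -/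
def Cn (n : ℕ) : Tm := lamN (n + 2) (app (appVars (var (n + 1)) 0 n) (var n))


/-- W_j = λx_1…x_n.(f_j (x_1 x_1 ⋯ x_n) ⋯ (x_n x_1 ⋯ x_n)); here f_j is the
variable of index 2n - j, bound by the surrounding λf_1…f_n. -/
def W (n j : ℕ) : Tm :=
  lamN n (((List.range n).reverse).foldl
    (fun s i => app s (appVars (var i) 0 n)) (var (2 * n - j)))

/-- Curry's n-ary multiple fixed-point combinator Φ_k^n = λf_1…f_n.(W_k W_1 ⋯ W_n). -/
def Phi (n k : ℕ) : Tm :=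
  lamN n (appList (W n k) ((List.range n).map fun i => W n (i + 1)))

-- ===== auxiliary development =====

lemma liftN_zero (t : Tm) : liftN 0 t = t := rfl
lemma liftN_succ' (m : ℕ) (t : Tm) : liftN (m+1) t = lift 0 (liftN m t) :=
  Function.iterate_succ_apply' _ _ _
lemma liftN_add (a b : ℕ) (t : Tm) : liftN (a+b) t = liftN a (liftN b t) :=
  Function.iterate_add_apply _ _ _ _

lemma lift_lift (t : Tm) : ∀ (c d : ℕ), d ≤ c → lift (c+1) (lift d t) = lift d (lift c t) := by
  induction t with
  | var n =>
      intro c d h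
      simp only [lift]
      split_ifs <;> simp only [lift] <;> split_ifs <;>
        first | rfl | (exact congrArg var (by omega)) | omega
  | app a b iha ihb => intro c d h; simp only [lift, iha _ _ h, ihb _ _ h]
  | lam a ih =>
      intro c d h
      simp only [lift]
      rw [show c + 1 + 1 = (c+1) + 1 from rfl, ih (c+1) (d+1) (by omega)]

lemma liftN_lift0 (k : ℕ) (t : Tm) : liftN k (lift 0 t) = lift k (liftN k t) := by
  induction k with
  | zero => rfl
  | succ k ih =>
      rw [liftN_succ', ih, liftN_succ']
      exact (lift_lift (liftN k t) k 0 (Nat.zero_le _)).symm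

lemma subst_lift (t : Tm) : ∀ (c : ℕ) (s : Tm), subst c s (lift c t) = t := by
  induction t with
  | var n =>
      intro c s
      simp only [lift]
      split_ifs with h1
      · simp only [subst]
        rw [if_neg (by omega : ¬ n = c), if_neg (by omega : ¬ c < n)]
      · simp only [subst]
        rw [if_neg (by omega : ¬ n + 1 = c), if_pos (by omega : c < n + 1)]
        exact congrArg var (by omega)
  | app a b iha ihb => intro c s; simp only [lift, subst, iha, ihb]
  | lam a ih => intro c s; simp only [lift, subst, ih]

lemma subst_liftN {k m : ℕ} (h : k < m) (s t : Tm) :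
    subst k s (liftN m t) = liftN (m-1) t := by
  have hm : m = k + ((m - 1 - k) + 1) := by omega
  rw [hm, liftN_add, liftN_succ', liftN_lift0, subst_lift, ← liftN_add,
    show k + (m - 1 - k) = k + ((m - 1 - k) + 1) - 1 by omega]

lemma subst_lamN (m : ℕ) (t : Tm) : ∀ (k : ℕ) (s : Tm),
    subst k s (lamN m t) = lamN m (subst (k+m) (liftN m s) t) := by
  induction m generalizing t with
  | zero => intro k s; rfl
  | succ m ih =>
      intro k s
      show lam (subst (k+1) (lift 0 s) (lamN m t)) = lam (lamN m _)
      rw [ih t (k+1) (lift 0 s), show k + 1 + m = k + (m + 1) by omega,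
        show liftN m (lift 0 s) = liftN (m+1) s from
          (Function.iterate_succ_apply (lift 0) m s).symm]

/-- Sequential substitution with offset `d`: the composite of the substitutions
produced by β-reducing `lamN |L| t` applied to the list `L`, viewed under `d` binders. -/
def seqD (d : ℕ) : Tm → List Tm → Tm
  | t, [] => t
  | t, a :: L => seqD d (subst (d + L.length) (liftN (d + L.length) a) t) L

@[simp] lemma seqD_nil (d : ℕ) (t : Tm) : seqD d t [] = t := rfl
lemma seqD_cons (d : ℕ) (t a : Tm) (L : List Tm) :
    seqD d t (a :: L) = seqD d (subst (d + L.length) (liftN (d + L.length) a) t) L := rfl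

lemma seqD_app (d : ℕ) (a b : Tm) (L : List Tm) :
    seqD d (app a b) L = app (seqD d a L) (seqD d b L) := by
  induction L generalizing a b with
  | nil => rfl
  | cons x L ih => simp only [seqD_cons, subst, ih]

lemma seqD_appList (d : ℕ) (t : Tm) (l L : List Tm) :
    seqD d (appList t l) L = appList (seqD d t L) (l.map (fun u => seqD d u L)) := by
  induction l generalizing t with
  | nil => rfl
  | cons x l ih =>
      show seqD d (appList (app t x) l) L = _
      rw [ih, seqD_app]
      rfl

lemma seqD_lamN (d m : ℕ) (t : Tm) (L : List Tm) :
    seqD d (lamN m t) L = lamN m (seqD (d+m) t L) := by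
  induction L generalizing t with
  | nil => rfl
  | cons a L ih =>
      rw [seqD_cons, subst_lamN, ih, ← liftN_add,
        show m + (d + L.length) = (d + m) + L.length by omega,
        show d + L.length + m = (d + m) + L.length by omega, seqD_cons]

lemma seqD_liftN (d : ℕ) (t : Tm) : ∀ (L : List Tm) (M : ℕ), d + L.length ≤ M →
    seqD d (liftN M t) L = liftN (M - L.length) t := by
  intro L
  induction L with
  | nil => intro M h; simp
  | cons a L ih =>
      intro M h
      simp only [List.length_cons] at h
      rw [seqD_cons, subst_liftN (by omega), ih (M-1) (by omega),
        show M - 1 - L.length = M - (a :: L).length by simp only [List.length_cons]; omega]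

lemma seqD_var_lt {d i : ℕ} (h : i < d) (L : List Tm) : seqD d (var i) L = var i := by
  induction L with
  | nil => rfl
  | cons a L ih =>
      rw [seqD_cons]
      have h1 : i ≠ d + L.length := by omega
      have h2 : ¬ (d + L.length < i) := by omega
      simp only [subst, if_neg h1, if_neg h2, ih]

lemma seqD_var_hit (d : ℕ) : ∀ (m : ℕ) (g : ℕ → Tm) (i : ℕ), i < m →
    seqD d (var (d + i)) ((List.range m).map g) = liftN d (g (m - 1 - i)) := by
  intro m
  induction m with
  | zero => intro g i hi; exact absurd hi (by omega)
  | succ m ih =>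
      intro g i hi
      rw [List.range_succ_eq_map, List.map_cons, List.map_map, seqD_cons]
      have hlen : ((List.range m).map (g ∘ Nat.succ)).length = m := by simp
      rw [hlen]
      by_cases h : i = m
      · simp only [subst, if_pos (show d + i = d + m by omega)]
        rw [seqD_liftN d (g 0) _ (d + m) (by simp)]
        simp only [List.length_map, List.length_range]
        rw [show d + m - m = d by omega, show m + 1 - 1 - i = 0 by omega]
      · have h1 : d + i ≠ d + m := by omega
        have h2 : ¬ (d + m < d + i) := by omega
        simp only [subst, if_neg h1, if_neg h2]
        rw [ih (g ∘ Nat.succ) i (by omega),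
          show (g ∘ Nat.succ) (m - 1 - i) = g (m + 1 - 1 - i) by
            simp only [Function.comp_apply]; exact congrArg g (by omega)]

-- ===== reduction lemmas =====

lemma Reduces.appL {a a' : Tm} (b : Tm) (h : Reduces a a') :
    Reduces (app a b) (app a' b) := by
  induction h with
  | refl => exact Relation.ReflTransGen.refl
  | tail _ h ih => exact Relation.ReflTransGen.tail ih (Step.appL _ h)

lemma Reduces.appR (a : Tm) {b b' : Tm} (h : Reduces b b') :
    Reduces (app a b) (app a b') := by
  induction h with
  | refl => exact Relation.ReflTransGen.refl
  | tail _ h ih => exact Relation.ReflTransGen.tail ih (Step.appR _ h)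

lemma Reduces.appList_left {t t' : Tm} (L : List Tm) (h : Reduces t t') :
    Reduces (appList t L) (appList t' L) := by
  induction L generalizing t t' with
  | nil => exact h
  | cons a L ih => exact ih (h.appL a)

lemma Reduces.appList_congr {t t' : Tm} {L L' : List Tm} (h : Reduces t t')
    (hl : List.Forall₂ Reduces L L') : Reduces (appList t L) (appList t' L') := by
  induction hl generalizing t t' with
  | nil => exact h
  | cons hx _ ih => exact ih (Relation.ReflTransGen.trans (h.appL _) (Reduces.appR _ hx))

lemma forall₂_map {α : Type} {R : Tm → Tm → Prop} (l : List α) (f g : α → Tm)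
    (h : ∀ x ∈ l, R (f x) (g x)) : List.Forall₂ R (l.map f) (l.map g) := by
  induction l with
  | nil => exact List.Forall₂.nil
  | cons x l ih =>
      exact List.Forall₂.cons (h x (by simp)) (ih (fun y hy => h y (by simp [hy])))

lemma red_beta_lamN (L : List Tm) (t : Tm) :
    Reduces (appList (lamN L.length t) L) (seqD 0 t L) := by
  induction L generalizing t with
  | nil => exact Relation.ReflTransGen.refl
  | cons a L ih =>
      show Reduces (appList (app (lam (lamN L.length t)) a) L) _
      have h1 : Step (app (lam (lamN L.length t)) a) (subst 0 a (lamN L.length t)) :=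
        Step.beta _ _
      have h2 : subst 0 a (lamN L.length t)
          = lamN L.length (subst (0 + L.length) (liftN (0 + L.length) a) t) := by
        rw [subst_lamN]
        congr 2 <;> simp
      refine Relation.ReflTransGen.trans
        (Reduces.appList_left L (Relation.ReflTransGen.single h1)) ?_
      rw [h2, seqD_cons]
      exact ih _

lemma reduces_betaEta {a b : Tm} (h : Reduces a b) : BetaEta a b := by
  induction h with
  | refl => exact Relation.EqvGen.refl _
  | tail _ h ih => exact Relation.EqvGen.trans _ _ _ ih (Relation.EqvGen.rel _ _ h)

-- ===== structural rewriting of W and Phi =====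

lemma appList_map_foldl {α : Type} (t : Tm) (l : List α) (f : α → Tm) :
    appList t (l.map f) = l.foldl (fun s i => app s (f i)) t := by
  simp [appList, List.foldl_map]

lemma appVars_eq (t : Tm) (a k : ℕ) :
    appVars t a k = appList t (((List.range k).reverse).map fun i => var (a+i)) := by
  rw [appList_map_foldl]; rfl

lemma W_eq (n j : ℕ) :
    W n j = lamN n (appList (var (2*n - j))
      (((List.range n).reverse).map fun i => appVars (var i) 0 n)) := by
  rw [appList_map_foldl]; rfl

lemma reverse_range_map (f : ℕ → Tm) (n : ℕ) :
    ((List.range n).reverse).map f = (List.range n).map (fun i => f (n - 1 - i)) := by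
  conv_lhs => rw [List.range_eq_range' (n := n), List.reverse_range']
  rw [List.map_map]
  apply List.map_congr_left
  intro x hx
  simp only [Function.comp_apply]
  exact congrArg f (by omega)

lemma seqD_appVars_lt {d i k : ℕ} (hi : i < d) (hk : k ≤ d) (L : List Tm) :
    seqD d (appVars (var i) 0 k) L = appVars (var i) 0 k := by
  rw [appVars_eq, seqD_appList, seqD_var_lt hi]
  congr 1
  rw [List.map_map]
  apply List.map_congr_left
  intro x hx
  simp only [List.mem_reverse, List.mem_range] at hx
  simp only [Function.comp_apply]
  exact seqD_var_lt (by omega) L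

-- ===== the substituted W-combinators =====

/-- The arguments (x_i x_1 ⋯ x_n) appearing in the body of W. -/
def bodyArgs (n : ℕ) : List Tm := ((List.range n).reverse).map fun i => appVars (var i) 0 n

/-- W with its f-variable replaced by (the lift of) F j. -/
def W2 (F : ℕ → Tm) (n j : ℕ) : Tm := lamN n (appList (liftN n (F j)) (bodyArgs n))

lemma bodyArgs_def (n : ℕ) :
    bodyArgs n = ((List.range n).reverse).map fun i => appVars (var i) 0 n := rfl
lemma W2_def (F : ℕ → Tm) (n j : ℕ) :
    W2 F n j = lamN n (appList (liftN n (F j)) (bodyArgs n)) := rfl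

lemma substW {n j : ℕ} (F : ℕ → Tm) (hj : 1 ≤ j) (hjn : j ≤ n) :
    seqD 0 (W n j) ((List.range n).map fun i => F (i+1)) = W2 F n j := by
  have hhead : seqD n (var (2*n - j)) ((List.range n).map fun i => F (i+1))
      = liftN n (F j) := by
    rw [show (2*n - j) = n + (n - j) by omega,
      seqD_var_hit n n (fun i => F (i+1)) (n-j) (by omega)]
    show liftN n (F (n - 1 - (n - j) + 1)) = liftN n (F j)
    rw [show n - 1 - (n - j) + 1 = j by omega]
  have hargs : (((List.range n).reverse).map fun i => appVars (var i) 0 n).map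
      (fun u => seqD n u ((List.range n).map fun i => F (i+1)))
      = ((List.range n).reverse).map fun i => appVars (var i) 0 n := by
    rw [List.map_map]
    apply List.map_congr_left
    intro x hx
    simp only [List.mem_reverse, List.mem_range] at hx
    simp only [Function.comp_apply]
    exact seqD_appVars_lt (by omega) (le_refl n) _
  rw [W_eq, seqD_lamN, Nat.zero_add, seqD_appList, hhead, hargs, W2_def, bodyArgs_def]

lemma seqD_var_LW (F : ℕ → Tm) (n p : ℕ) (hp : p < n) :
    seqD 0 (var p) ((List.range n).map fun j => W2 F n (j+1)) = W2 F n (n - p) := by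
  have h := seqD_var_hit 0 n (fun j => W2 F n (j+1)) p hp
  rw [Nat.zero_add] at h
  rw [h, liftN_zero]
  show W2 F n (n - 1 - p + 1) = W2 F n (n - p)
  rw [show n - 1 - p + 1 = n - p by omega]

lemma seqD_appVars_LW (F : ℕ → Tm) (n i : ℕ) (hi : i < n) :
    seqD 0 (appVars (var i) 0 n) ((List.range n).map fun j => W2 F n (j+1))
      = appList (W2 F n (n - i)) ((List.range n).map fun j => W2 F n (j+1)) := by
  rw [appVars_eq, seqD_appList, seqD_var_LW F n i hi]
  congr 1
  rw [List.map_map, reverse_range_map]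
  apply List.map_congr_left
  intro x hx
  simp only [List.mem_range] at hx
  simp only [Function.comp_apply]
  rw [Nat.zero_add, seqD_var_LW F n (n-1-x) (by omega),
    show n - (n - 1 - x) = x + 1 by omega]

lemma stage1 (F : ℕ → Tm) (n j : ℕ) (hj : 1 ≤ j) (hjn : j ≤ n) :
    Reduces (appList (Phi n j) ((List.range n).map fun i => F (i+1)))
      (appList (W2 F n j) ((List.range n).map fun i => W2 F n (i+1))) := by
  have hlen : ((List.range n).map fun i => F (i+1)).length = n := by simp
  have h1 := red_beta_lamN ((List.range n).map fun i => F (i+1))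
      (appList (W n j) ((List.range n).map fun i => W n (i+1)))
  rw [hlen] at h1
  have h2 : seqD 0 (appList (W n j) ((List.range n).map fun i => W n (i+1)))
        ((List.range n).map fun i => F (i+1))
      = appList (W2 F n j) ((List.range n).map fun i => W2 F n (i+1)) := by
    rw [seqD_appList, substW F hj hjn, List.map_map]
    congr 1
    apply List.map_congr_left
    intro x hx
    simp only [List.mem_range] at hx
    simp only [Function.comp_apply]
    exact substW F (by omega) (by omega)
  rw [h2] at h1
  exact h1

lemma stage2 (F : ℕ → Tm) (n k : ℕ) :
    Reduces (appList (W2 F n k) ((List.range n).map fun j => W2 F n (j+1)))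
      (appList (F k) ((List.range n).map fun j =>
        appList (W2 F n (j+1)) ((List.range n).map fun i => W2 F n (i+1)))) := by
  have hlen : ((List.range n).map fun j => W2 F n (j+1)).length = n := by simp
  have h1 := red_beta_lamN ((List.range n).map fun j => W2 F n (j+1))
      (appList (liftN n (F k)) (bodyArgs n))
  rw [hlen] at h1
  have h2 : seqD 0 (appList (liftN n (F k)) (bodyArgs n))
        ((List.range n).map fun j => W2 F n (j+1))
      = appList (F k) ((List.range n).map fun j =>
          appList (W2 F n (j+1)) ((List.range n).map fun i => W2 F n (i+1))) := by
    rw [seqD_appList, seqD_liftN 0 (F k) _ n (by simp), hlen,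
      show n - n = 0 by omega, liftN_zero]
    congr 1
    rw [bodyArgs_def, List.map_map, reverse_range_map]
    apply List.map_congr_left
    intro x hx
    simp only [List.mem_range] at hx
    simp only [Function.comp_apply]
    rw [seqD_appVars_LW F n (n-1-x) (by omega), show n - (n - 1 - x) = x + 1 by omega]
  rw [h2] at h1
  exact h1

/-- for n ≥ 1, 1 ≤ k ≤ n and all terms F_1,…,F_n,
(Φ_k^n F_1 ⋯ F_n) =βη (F_k (Φ_1^n F_1 ⋯ F_n) ⋯ (Φ_n^n F_1 ⋯ F_n)). -/
theorem curry_multiple_fixed_points (n k : ℕ) (hn : 1 ≤ n) (hk : 1 ≤ k)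
    (hkn : k ≤ n) (F : ℕ → Tm) :
    BetaEta (appList (Phi n k) ((List.range n).map fun i => F (i + 1)))
      (appList (F k) ((List.range n).map fun j =>
        appList (Phi n (j + 1)) ((List.range n).map fun i => F (i + 1)))) := by
  have hred1 : Reduces (appList (Phi n k) ((List.range n).map fun i => F (i + 1)))
      (appList (F k) ((List.range n).map fun j =>
        appList (W2 F n (j+1)) ((List.range n).map fun i => W2 F n (i+1)))) :=
    Relation.ReflTransGen.trans (stage1 F n k hk hkn) (stage2 F n k)
  have hred2 : Reduces
      (appList (F k) ((List.range n).map fun j =>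
        appList (Phi n (j + 1)) ((List.range n).map fun i => F (i + 1))))
      (appList (F k) ((List.range n).map fun j =>
        appList (W2 F n (j+1)) ((List.range n).map fun i => W2 F n (i+1)))) := by
    refine Reduces.appList_congr Relation.ReflTransGen.refl ?_
    refine forall₂_map (List.range n) _ _ ?_
    intro j hj
    simp only [List.mem_range] at hj
    exact stage1 F n (j+1) (by omega) (by omega)
  exact Relation.EqvGen.trans _ _ _ (reduces_betaEta hred1)
    (Relation.EqvGen.symm _ _ (reduces_betaEta hred2))

end Tm
end LC
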